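/- For integers $n \geq 1$, $0 \leq j \leq n-1$ and $m \geq 1$, one has $\sum_{i=j+1}^{n} \binom{n}{i}\binom{j+m-1}{i-1}\binom{i-1}{j} = \sum_{i=1}^{n-j} \binom{n-i}{j}\binom{m+n-i-1}{n-i}$. -/

import Mathlib

open Finset

private theorem trin' (N c r : ℕ) :
    N.choose (c + r) * (c + r).choose c = N.choose c * (N - c).choose r := by
  rcases le_or_gt (c + r) N with h | h
  · have := Nat.choose_mul (n := N) (k := c + r) (s := c) (Nat.le_add_right _ _)
    simpa using this
  · have h0 : N.choose (c + r) = 0 := Nat.choose_eq_zero_of_lt h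
    rcases le_or_gt c N with hc | hc
    · rw [h0, Nat.choose_eq_zero_of_lt (show N - c < r from by omega)]
      simp
    · rw [h0, Nat.choose_eq_zero_of_lt hc]
      simp

private theorem lemB (j m' : ℕ) : ∀ d : ℕ,
    ∑ k ∈ Finset.range (d + 1), (j + k).choose j * (m' + (j + k)).choose (j + k)
      = (j + m').choose j * (m' + j + d + 1).choose d := by
  intro d
  induction d with
  | zero =>
    simp [Nat.add_comm j m']
  | succ d ih =>
    rw [Finset.sum_range_succ, ih]
    have hpascal : (m' + j + (d + 1) + 1).choose (d + 1)
        = (m' + j + d + 1).choose d + (m' + j + d + 1).choose (d + 1) := by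
      rw [show m' + j + (d + 1) + 1 = (m' + j + d + 1) + 1 from by omega]
      exact Nat.choose_succ_succ' (m' + j + d + 1) d
    rw [hpascal, Nat.mul_add]
    congr 1
    -- key : (j + (d+1)).choose j * (m' + (j + (d+1))).choose (j + (d+1))
    --     = (j + m').choose j * (m' + j + d + 1).choose (d + 1)
    set a := m' + j + d + 1 with ha
    have h1 : a.choose (j + (d + 1)) * (j + (d + 1)).choose j
        = a.choose j * (m' + d + 1).choose (d + 1) := by
      have := trin' a j (d + 1)
      rwa [show a - j = m' + d + 1 from by omega] at this
    have h2 : a.choose (j + m') * (j + m').choose j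
        = a.choose j * (m' + d + 1).choose m' := by
      have := trin' a j m'
      rwa [show a - j = m' + d + 1 from by omega] at this
    have h3 : (m' + d + 1).choose (d + 1) = (m' + d + 1).choose m' := by
      rw [show d + 1 = (m' + d + 1) - m' from by omega]
      exact Nat.choose_symm (by omega)
    have h4 : a.choose (d + 1) = a.choose (j + m') := by
      rw [show d + 1 = a - (j + m') from by omega]
      exact Nat.choose_symm (by omega)
    calc (j + (d + 1)).choose j * (m' + (j + (d + 1))).choose (j + (d + 1))
        = a.choose (j + (d + 1)) * (j + (d + 1)).choose j := by
          rw [show m' + (j + (d + 1)) = a from by omega]; ring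
      _ = a.choose j * (m' + d + 1).choose m' := by rw [h1, h3]
      _ = a.choose (j + m') * (j + m').choose j := h2.symm
      _ = (j + m').choose j * a.choose (d + 1) := by rw [h4]; ring

theorem sum_choose_identity (n j m : ℕ) (hn : 1 ≤ n) (hj : j ≤ n - 1) (hm : 1 ≤ m) :
    ∑ i ∈ Finset.Icc (j + 1) n, n.choose i * (j + m - 1).choose (i - 1) * (i - 1).choose j
      = ∑ i ∈ Finset.Icc 1 (n - j), (n - i).choose j * (m + n - i - 1).choose (n - i) := by
  obtain ⟨m', rfl⟩ : ∃ m', m = m' + 1 := ⟨m - 1, by omega⟩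
  obtain ⟨d, rfl⟩ : ∃ d, n = j + d + 1 := ⟨n - j - 1, by omega⟩
  have hIccL : Finset.Icc (j + 1) (j + d + 1) = Finset.Ico (j + 1) (j + d + 2) := by
    rw [show j + d + 2 = j + d + 1 + 1 from rfl, Finset.Ico_add_one_right_eq_Icc]
  have hIccR : Finset.Icc 1 (j + d + 1 - j) = Finset.Ico 1 (d + 2) := by
    rw [show j + d + 1 - j = d + 1 from by omega, show d + 2 = d + 1 + 1 from rfl, Finset.Ico_add_one_right_eq_Icc]
  rw [hIccL, hIccR, Finset.sum_Ico_eq_sum_range, Finset.sum_Ico_eq_sum_range]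
  rw [show j + d + 2 - (j + 1) = d + 1 from by omega, show d + 2 - 1 = d + 1 from by omega]
  -- LHS terms
  have hL : ∀ k ∈ Finset.range (d + 1),
      (j + d + 1).choose (j + 1 + k) * (j + (m' + 1) - 1).choose (j + 1 + k - 1) *
        (j + 1 + k - 1).choose j
      = (j + m').choose j * (m'.choose k * (j + d + 1).choose (j + 1 + k)) := by
    intro k hk
    rw [show j + (m' + 1) - 1 = j + m' from by omega, show j + 1 + k - 1 = j + k from by omega]
    have := trin' (j + m') j k
    rw [Nat.add_sub_cancel_left] at this
    calc (j + d + 1).choose (j + 1 + k) * (j + m').choose (j + k) * (j + k).choose j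
        = (j + m').choose (j + k) * (j + k).choose j * (j + d + 1).choose (j + 1 + k) := by ring
      _ = (j + m').choose j * m'.choose k * (j + d + 1).choose (j + 1 + k) := by rw [this]
      _ = _ := by ring
  rw [Finset.sum_congr rfl hL, ← Finset.mul_sum]
  -- Vandermonde for LHS inner sum
  have hvand : ∑ k ∈ Finset.range (d + 1), m'.choose k * (j + d + 1).choose (j + 1 + k)
      = (m' + (j + d + 1)).choose d := by
    rw [Nat.add_choose_eq, Finset.Nat.sum_antidiagonal_eq_sum_range_succ_mk]
    refine Finset.sum_congr rfl fun k hk => ?_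
    simp only [Finset.mem_range] at hk
    congr 1
    rw [show d - k = (j + d + 1) - (j + 1 + k) from by omega]
    exact (Nat.choose_symm (by omega)).symm
  rw [hvand]
  -- RHS
  have hR : ∀ i ∈ Finset.range (d + 1),
      (j + d + 1 - (1 + i)).choose j *
        (m' + 1 + (j + d + 1) - (1 + i) - 1).choose (j + d + 1 - (1 + i))
      = (fun k => (j + k).choose j * (m' + (j + k)).choose (j + k)) (d + 1 - 1 - i) := by
    intro i hi
    simp only [Finset.mem_range] at hi
    rw [show j + d + 1 - (1 + i) = j + (d + 1 - 1 - i) from by omega,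
      show m' + 1 + (j + d + 1) - (1 + i) - 1 = m' + (j + (d + 1 - 1 - i)) from by omega]
  rw [Finset.sum_congr rfl hR, Finset.sum_range_reflect
    (fun k => (j + k).choose j * (m' + (j + k)).choose (j + k)) (d + 1)]
  rw [lemB j m' d, show m' + (j + d + 1) = m' + j + d + 1 from by omega]
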